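/- Suppose every hyperedge e with m(e) ≠ 0 has cardinality |e| ≤ 2. Then for each vertex k ∈ Fin N, the operator P_k = ω^{−m({k})} · X_k ∘ ∏_{n ≠ k} Z_n^{−m({k,n})} (exponents being integer lifts of elements of ZMod d, with negative powers denoting inverses) fixes the state: P_k |H(m)⟩ = |H(m)⟩. Hence |H(m)⟩ is a common eigenvector with eigenvalue 1 of N elements of the generalized Pauli group, i.e., of operators of the form (scalar power of ω) times a product of single-qudit X and Z powers. -/

import Mathlib

open Finset

noncomputable section

/-- The primitive `d`-th root of unity `ω = exp(2πi/d)`. -/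
def omega (d : ℕ) : ℂ := Complex.exp (2 * Real.pi * Complex.I / d)

/-- The `N`-qudit Hilbert space, modeled as functions from points to amplitudes. -/
abbrev QV (d N : ℕ) := (Fin N → Fin d) → ℂ

/-- Diagonal operator with diagonal phase function `φ`. -/
def diagOp (d N : ℕ) (φ : (Fin N → Fin d) → ℂ) : Module.End ℂ (QV d N) where
  toFun ψ := fun i => φ i * ψ i
  map_add' ψ ψ' := by funext i; simp [mul_add]
  map_smul' c ψ := by funext i; simp [smul_eq_mul]; ring

lemma diag_comm (d N : ℕ) (φ φ' : (Fin N → Fin d) → ℂ) :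
    Commute (diagOp d N φ) (diagOp d N φ') := by
  apply LinearMap.ext; intro ψ; funext i
  simp [diagOp, Module.End.mul_apply]; ring

/-- The hyperedge operator `C_e`. -/
def Ce (d N : ℕ) (e : Finset (Fin N)) : Module.End ℂ (QV d N) :=
  diagOp d N fun i => omega d ^ ∏ k ∈ e, (i k : ℕ)

/-- The inverse of the hyperedge operator `C_e`. -/
def CeInv (d N : ℕ) (e : Finset (Fin N)) : Module.End ℂ (QV d N) :=
  diagOp d N fun i => (omega d ^ ∏ k ∈ e, (i k : ℕ))⁻¹

/-- The qudit hypergraph state `|H(m)⟩` for a multiplicity function `m`. -/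
def Hstate (d N : ℕ) (m : Finset (Fin N) → ZMod d) : QV d N :=
  fun i => (d : ℂ) ^ (-(N : ℂ)/2) *
    omega d ^ (∑ e : Finset (Fin N), m e * ∏ k ∈ e, ((i k : ℕ) : ZMod d)).val

/-- The generalized Pauli `X` operator on vertex `k`. -/
def Xop (d N : ℕ) [NeZero d] (k : Fin N) : Module.End ℂ (QV d N) where
  toFun ψ := fun i => ψ (Function.update i k (i k + 1))
  map_add' ψ ψ' := by funext i; simp
  map_smul' c ψ := by funext i; simp

/-- The inverse of the generalized Pauli `Z` operator on vertex `k`. -/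
def ZopInv (d N : ℕ) (k : Fin N) : Module.End ℂ (QV d N) :=
  diagOp d N fun i => (omega d ^ (i k : ℕ))⁻¹

/-- The Pauli-group operator
`P_k = ω^{-m({k})} · X_k ∘ ∏_{n ≠ k} Z_n^{-m({k,n})}` (exponents are the canonical
integer lifts of values in `ZMod d`, negative powers denoting inverses). -/
def Pk (d N : ℕ) [NeZero d] (m : Finset (Fin N) → ZMod d) (k : Fin N) :
    Module.End ℂ (QV d N) :=
  (omega d ^ (m {k}).val)⁻¹ •
    (Xop d N k *
      Finset.noncommProd (Finset.univ.filter fun n : Fin N => n ≠ k)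
        (fun n => ZopInv d N n ^ (m {k, n}).val)
        (fun _ _ _ _ _ => (diag_comm d N _ _).pow_pow _ _))


/-! ### Auxiliary lemmas -/

lemma omega_pow_d (d : ℕ) [NeZero d] : omega d ^ d = 1 := by
  rw [omega, ← Complex.exp_nat_mul, mul_div_cancel₀]
  · exact Complex.exp_two_pi_mul_I
  · exact_mod_cast (NeZero.ne d)

lemma omega_ne (d : ℕ) : omega d ≠ 0 := Complex.exp_ne_zero _

lemma omega_pow_nat (d : ℕ) [NeZero d] (a : ℕ) :
    omega d ^ a = omega d ^ ((a : ZMod d)).val := by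
  conv_lhs => rw [← Nat.div_add_mod a d]
  rw [pow_add, pow_mul, omega_pow_d, one_pow, one_mul, ZMod.val_natCast]

lemma omega_pow_add (d : ℕ) [NeZero d] (x y : ZMod d) :
    omega d ^ (x + y).val = omega d ^ x.val * omega d ^ y.val := by
  rw [← pow_add, omega_pow_nat d (x.val + y.val)]
  congr 2
  push_cast [ZMod.natCast_val, ZMod.cast_id]
  ring

lemma omega_pow_sum (d : ℕ) [NeZero d] {ι : Type*} (s : Finset ι) (g : ι → ZMod d) :
    omega d ^ (∑ x ∈ s, g x).val = ∏ x ∈ s, omega d ^ (g x).val := by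
  induction s using Finset.cons_induction with
  | empty => simp
  | cons a s ha ih => rw [Finset.sum_cons, omega_pow_add, ih, Finset.prod_cons]

lemma diagOp_mul (d N : ℕ) (φ φ' : (Fin N → Fin d) → ℂ) :
    diagOp d N φ * diagOp d N φ' = diagOp d N (fun i => φ i * φ' i) := by
  apply LinearMap.ext; intro ψ; funext i
  simp [diagOp, Module.End.mul_apply]; ring

lemma diagOp_pow (d N : ℕ) (φ : (Fin N → Fin d) → ℂ) (p : ℕ) :
    diagOp d N φ ^ p = diagOp d N (fun i => φ i ^ p) := by
  induction p with
  | zero =>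
    simp only [pow_zero]
    apply LinearMap.ext; intro ψ; simp [diagOp]
  | succ p ih => rw [pow_succ, ih, diagOp_mul]; simp only [pow_succ]

lemma noncommProd_diagOp (d N : ℕ) (s : Finset (Fin N))
    (g : Fin N → (Fin N → Fin d) → ℂ) :
    s.noncommProd (fun n => diagOp d N (g n))
      (fun _ _ _ _ _ => diag_comm d N _ _)
      = diagOp d N (fun i => ∏ n ∈ s, g n i) := by
  induction s using Finset.cons_induction with
  | empty =>
    simp only [Finset.noncommProd_empty, Finset.prod_empty]
    apply LinearMap.ext; intro ψ; simp [diagOp]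
  | cons a s ha ih =>
    refine (Finset.noncommProd_cons s a _ ha _).trans ?_
    rw [ih, diagOp_mul]
    congr 1; funext i; rw [Finset.prod_cons]

lemma key_sum (d N : ℕ) [NeZero d] (hd : 2 ≤ d) (m : Finset (Fin N) → ZMod d)
    (hcard : ∀ e : Finset (Fin N), m e ≠ 0 → e.card ≤ 2) (k : Fin N) (i : Fin N → Fin d) :
    (∑ e : Finset (Fin N), m e * ∏ l ∈ e, ((Function.update i k (i k + 1) l : ℕ) : ZMod d))
      = (∑ e : Finset (Fin N), m e * ∏ l ∈ e, ((i l : ℕ) : ZMod d))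
        + (m {k} + ∑ n ∈ univ.filter (· ≠ k), ((i n : ℕ) : ZMod d) * m {k, n}) := by
  set f : Fin N → ZMod d := fun l => ((i l : ℕ) : ZMod d) with hf
  set f' : Fin N → ZMod d := fun l => ((Function.update i k (i k + 1) l : ℕ) : ZMod d) with hf'def
  have hf' : ∀ l, l ≠ k → f' l = f l := by
    intro l hl; simp [hf'def, hf, Function.update_of_ne hl]
  have hf'k : f' k = f k + 1 := by
    simp only [hf'def, hf, Function.update_self]
    have : ((i k + 1 : Fin d) : ℕ) = ((i k : ℕ) + (1 : Fin d).val) % d := by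
      rw [Fin.val_add]
    rw [this]
    have h1 : ((1 : Fin d) : ℕ) = 1 := by
      rw [Fin.val_one']; exact Nat.mod_eq_of_lt (by omega)
    rw [h1]
    push_cast [ZMod.natCast_mod]
    ring
  have hprod : ∀ e : Finset (Fin N), (∏ l ∈ e, f' l)
      = (∏ l ∈ e, f l) + (if k ∈ e then ∏ l ∈ e.erase k, f l else 0) := by
    intro e
    by_cases hk : k ∈ e
    · rw [if_pos hk, ← Finset.mul_prod_erase e f' hk, ← Finset.mul_prod_erase e f hk]
      have heq : ∏ l ∈ e.erase k, f' l = ∏ l ∈ e.erase k, f l :=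
        Finset.prod_congr rfl fun l hl => hf' l (Finset.ne_of_mem_erase hl)
      rw [heq, hf'k]; ring
    · rw [if_neg hk, add_zero]
      exact Finset.prod_congr rfl fun l hl => hf' l (by rintro rfl; exact hk hl)
  have step1 : (∑ e : Finset (Fin N), m e * ∏ l ∈ e, f' l)
      = (∑ e : Finset (Fin N), m e * ∏ l ∈ e, f l)
        + ∑ e ∈ univ.filter (fun e : Finset (Fin N) => k ∈ e), m e * ∏ l ∈ e.erase k, f l := by
    rw [Finset.sum_filter]
    rw [← Finset.sum_add_distrib]
    refine Finset.sum_congr rfl fun e _ => ?_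
    rw [hprod e, mul_add, mul_ite, mul_zero]
  rw [step1]
  congr 1
  -- now the combinatorial part
  set edge : Fin N → Finset (Fin N) := fun n => {k, n} with hedge
  set T : Finset (Fin N) → ZMod d := fun e => m e * ∏ l ∈ e.erase k, f l with hT
  have hinj : ∀ x ∈ (univ : Finset (Fin N)), ∀ y ∈ univ, edge x = edge y → x = y := by
    intro x _ y _ h
    have hx : x ∈ edge y := h ▸ (show x ∈ edge x by simp [hedge])
    have hy : y ∈ edge x := h ▸ (show y ∈ edge y by simp [hedge])
    simp only [hedge, Finset.mem_insert, Finset.mem_singleton] at hx hy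
    rcases hx with rfl | rfl
    · rcases hy with rfl | rfl <;> rfl
    · rfl
  have himg : Finset.image edge univ ⊆ univ.filter (fun e : Finset (Fin N) => k ∈ e) := by
    intro e he
    rw [Finset.mem_image] at he
    obtain ⟨n, -, rfl⟩ := he
    simp [hedge]
  have hzero : ∀ e ∈ univ.filter (fun e : Finset (Fin N) => k ∈ e),
      e ∉ Finset.image edge univ → T e = 0 := by
    intro e hef henot
    by_cases hme : m e = 0
    · simp [hT, hme]
    exfalso
    apply henot
    have hk : k ∈ e := (Finset.mem_filter.mp hef).2
    have hc2 := hcard e hme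
    have hc1 : 1 ≤ e.card := Finset.card_pos.mpr ⟨k, hk⟩
    rw [Finset.mem_image]
    interval_cases h : e.card
    · obtain ⟨a, rfl⟩ := Finset.card_eq_one.mp h
      have : k = a := by simpa using hk
      subst this
      exact ⟨k, mem_univ k, by simp [hedge]⟩
    · obtain ⟨a, b, hab, rfl⟩ := Finset.card_eq_two.mp h
      rcases Finset.mem_insert.mp hk with rfl | hkb
      · exact ⟨b, mem_univ b, rfl⟩
      · have : k = b := Finset.mem_singleton.mp hkb
        subst this
        exact ⟨a, mem_univ a, (Finset.pair_comm a k).symm⟩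
  calc ∑ e ∈ univ.filter (fun e : Finset (Fin N) => k ∈ e), T e
      = ∑ e ∈ Finset.image edge univ, T e := (Finset.sum_subset himg hzero).symm
    _ = ∑ n : Fin N, T (edge n) := Finset.sum_image hinj
    _ = T (edge k) + ∑ n ∈ univ.erase k, T (edge n) :=
        (Finset.add_sum_erase univ _ (mem_univ k)).symm
    _ = m {k} + ∑ n ∈ univ.filter (· ≠ k), f n * m {k, n} := by
        congr 1
        · simp [hT, hedge]
        · rw [Finset.filter_ne']
          refine Finset.sum_congr rfl fun n hn => ?_
          have hnk : n ≠ k := Finset.ne_of_mem_erase hn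
          have : (edge n).erase k = {n} := by
            ext x
            simp only [hedge, Finset.mem_erase, Finset.mem_insert, Finset.mem_singleton]
            constructor
            · rintro ⟨hx, rfl | rfl⟩
              · exact absurd rfl hx
              · rfl
            · rintro rfl; exact ⟨hnk, Or.inr rfl⟩
          rw [hT]
          simp only [this, Finset.prod_singleton]
          ring

/-- If every hyperedge of nonzero multiplicity has cardinality at
most 2, then for each vertex `k` the generalized-Pauli-group element `P_k` fixes
`|H(m)⟩`; hence `|H(m)⟩` is a common eigenvector with eigenvalue 1 of `N` elements
of the generalized Pauli group. -/
theorem Pauli_stabilizer_of_card_le_two (d N : ℕ) [NeZero d] (hd : 2 ≤ d) (hN : 1 ≤ N)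
    (m : Finset (Fin N) → ZMod d)
    (hcard : ∀ e : Finset (Fin N), m e ≠ 0 → e.card ≤ 2) (k : Fin N) :
    Pk d N m k (Hstate d N m) = Hstate d N m := by
  have hNP : Finset.noncommProd (Finset.univ.filter fun n : Fin N => n ≠ k)
      (fun n => ZopInv d N n ^ (m {k, n}).val)
      (fun _ _ _ _ _ => (diag_comm d N _ _).pow_pow _ _)
      = diagOp d N (fun i => ∏ n ∈ Finset.univ.filter (fun n : Fin N => n ≠ k),
          ((omega d ^ (i n : ℕ))⁻¹) ^ (m {k, n}).val) := by
    refine (Finset.noncommProd_congr rfl (fun n _ => ?_) _).trans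
      (noncommProd_diagOp d N _ (fun n i => ((omega d ^ (i n : ℕ))⁻¹) ^ (m {k, n}).val))
    rw [ZopInv, diagOp_pow]
  rw [Pk, hNP, LinearMap.smul_apply, Module.End.mul_apply]
  funext i
  simp only [Pi.smul_apply, smul_eq_mul, Xop, diagOp, LinearMap.coe_mk, AddHom.coe_mk,
    Hstate]
  set i' := Function.update i k (i k + 1) with hi'
  have hterm : ∀ n ∈ Finset.univ.filter (fun n : Fin N => n ≠ k),
      ((omega d ^ (i' n : ℕ))⁻¹) ^ (m {k, n}).val
        = (omega d ^ ((((i n : ℕ) : ZMod d) * m {k, n}).val))⁻¹ := by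
    intro n hn
    have hnk : n ≠ k := by simpa using (Finset.mem_filter.mp hn).2
    rw [hi', Function.update_of_ne hnk, inv_pow, ← pow_mul,
      omega_pow_nat d ((i n : ℕ) * (m {k, n}).val)]
    congr 2
    push_cast [ZMod.natCast_val, ZMod.cast_id]
    ring
  rw [Finset.prod_congr rfl hterm, Finset.prod_inv_distrib, ← omega_pow_sum,
    key_sum d N hd m hcard k i, omega_pow_add, omega_pow_add]
  have ha : omega d ^ (m {k}).val ≠ 0 := pow_ne_zero _ (omega_ne d)
  have hb : omega d ^ (∑ n ∈ Finset.univ.filter (· ≠ k),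
      ((i n : ℕ) : ZMod d) * m {k, n}).val ≠ 0 := pow_ne_zero _ (omega_ne d)
  field_simp


end
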